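/- arXiv:1111.6796 — 2 statements merged into one kernel-verified Lean document; each statement's English description precedes it below -/
import Mathlib

section
/- Let r > 0 be real, t ∈ ℝ, τ = (τ₁, τ₂) ∈ ℂ², and let U be a 2×2 complex matrix with U*U = I₂. Then all sixteen entries of the 4×4 matrix P = N_(τ,t) · A_r · M_U lie in Z[ω] if and only if: r = 1, all entries of U lie in Z[ω], τ₁ ∈ Z[ω] and τ₂ ∈ Z[ω], and there exists k ∈ ℤ with t = √3·k such that k and |τ₁|² + |τ₂|² are integers of the same parity (k ≡ |τ₁|² + |τ₂|² (mod 2)). -/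
open Matrix Complex

/-- ω = (−1 + i√3)/2, a primitive cube root of unity. -/
noncomputable def ω : ℂ := (-1 + Complex.I * Real.sqrt 3) / 2

/-- The Eisenstein integers Z[ω], as a subset of ℂ. -/
def Zω : Set ℂ := {z : ℂ | ∃ a b : ℤ, z = (a : ℂ) + (b : ℂ) * ω}

/-- The Hermitian form matrix J. -/
def Jm : Matrix (Fin 4) (Fin 4) ℂ := !![0,0,0,1; 0,1,0,0; 0,0,1,0; 1,0,0,0]

/-- Heisenberg translation N_(τ,t). -/
noncomputable def N (τ₁ τ₂ : ℂ) (t : ℝ) : Matrix (Fin 4) (Fin 4) ℂ :=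
  !![1, -(starRingEnd ℂ) τ₁, -(starRingEnd ℂ) τ₂,
       (-((Complex.normSq τ₁ : ℂ) + (Complex.normSq τ₂ : ℂ)) + Complex.I * (t : ℝ)) / 2;
     0, 1, 0, τ₁;
     0, 0, 1, τ₂;
     0, 0, 0, 1]

/-- Heisenberg rotation M_U = diag(1, U, 1). -/
def M (U : Matrix (Fin 2) (Fin 2) ℂ) : Matrix (Fin 4) (Fin 4) ℂ :=
  !![1, 0, 0, 0;
     0, U 0 0, U 0 1, 0;
     0, U 1 0, U 1 1, 0;
     0, 0, 0, 1]

/-- Heisenberg dilation A_r = diag(r, 1, 1, 1/r). -/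
noncomputable def Ad (r : ℝ) : Matrix (Fin 4) (Fin 4) ℂ :=
  !![(r : ℂ), 0, 0, 0; 0, 1, 0, 0; 0, 0, 1, 0; 0, 0, 0, (r : ℂ)⁻¹]

noncomputable def U₁ : Matrix (Fin 2) (Fin 2) ℂ := !![0, 1; 1, 0]
noncomputable def U₂ : Matrix (Fin 2) (Fin 2) ℂ := !![-ω, 0; 0, 1]

/-- The Heisenberg translation N₁ = N_((1,0)ᵀ, √3). -/
noncomputable def N₁ : Matrix (Fin 4) (Fin 4) ℂ := N 1 0 (Real.sqrt 3)

/-- The involution R. -/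
def Rmat : Matrix (Fin 4) (Fin 4) ℂ := !![0,0,0,1; 0,-1,0,0; 0,0,-1,0; 1,0,0,0]

/-- The generators {N₁, M_{U₁}, M_{U₂}} of the stabilizer of ∞, as a subset of GL(4,ℂ). -/
noncomputable def gens3 : Set (GL (Fin 4) ℂ) :=
  {g | (g : Matrix (Fin 4) (Fin 4) ℂ) = N₁ ∨ (g : Matrix (Fin 4) (Fin 4) ℂ) = M U₁ ∨
       (g : Matrix (Fin 4) (Fin 4) ℂ) = M U₂}

/-- The generators {U₁, U₂}, as a subset of GL(2,ℂ). -/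
noncomputable def gens2 : Set (GL (Fin 2) ℂ) :=
  {g | (g : Matrix (Fin 2) (Fin 2) ℂ) = U₁ ∨ (g : Matrix (Fin 2) (Fin 2) ℂ) = U₂}

/-- The generators {N₁, M_{U₁}, M_{U₂}, R}, as a subset of GL(4,ℂ). -/
noncomputable def gens4 : Set (GL (Fin 4) ℂ) :=
  {g | (g : Matrix (Fin 4) (Fin 4) ℂ) = N₁ ∨ (g : Matrix (Fin 4) (Fin 4) ℂ) = M U₁ ∨
       (g : Matrix (Fin 4) (Fin 4) ℂ) = M U₂ ∨ (g : Matrix (Fin 4) (Fin 4) ℂ) = Rmat}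


set_option maxHeartbeats 1000000 in
theorem my_mul_fin_four {α} [AddCommMonoid α] [Mul α]
    (a₁₁ a₁₂ a₁₃ a₁₄ a₂₁ a₂₂ a₂₃ a₂₄ a₃₁ a₃₂ a₃₃ a₃₄ a₄₁ a₄₂ a₄₃ a₄₄
     b₁₁ b₁₂ b₁₃ b₁₄ b₂₁ b₂₂ b₂₃ b₂₄ b₃₁ b₃₂ b₃₃ b₃₄ b₄₁ b₄₂ b₄₃ b₄₄ : α) :
    !![a₁₁, a₁₂, a₁₃, a₁₄;
       a₂₁, a₂₂, a₂₃, a₂₄;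
       a₃₁, a₃₂, a₃₃, a₃₄;
       a₄₁, a₄₂, a₄₃, a₄₄] * !![b₁₁, b₁₂, b₁₃, b₁₄;
                           b₂₁, b₂₂, b₂₃, b₂₄;
                           b₃₁, b₃₂, b₃₃, b₃₄;
                           b₄₁, b₄₂, b₄₃, b₄₄] =
    !![a₁₁*b₁₁ + a₁₂*b₂₁ + a₁₃*b₃₁ + a₁₄*b₄₁, a₁₁*b₁₂ + a₁₂*b₂₂ + a₁₃*b₃₂ + a₁₄*b₄₂,
         a₁₁*b₁₃ + a₁₂*b₂₃ + a₁₃*b₃₃ + a₁₄*b₄₃, a₁₁*b₁₄ + a₁₂*b₂₄ + a₁₃*b₃₄ + a₁₄*b₄₄;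
       a₂₁*b₁₁ + a₂₂*b₂₁ + a₂₃*b₃₁ + a₂₄*b₄₁, a₂₁*b₁₂ + a₂₂*b₂₂ + a₂₃*b₃₂ + a₂₄*b₄₂,
         a₂₁*b₁₃ + a₂₂*b₂₃ + a₂₃*b₃₃ + a₂₄*b₄₃, a₂₁*b₁₄ + a₂₂*b₂₄ + a₂₃*b₃₄ + a₂₄*b₄₄;
       a₃₁*b₁₁ + a₃₂*b₂₁ + a₃₃*b₃₁ + a₃₄*b₄₁, a₃₁*b₁₂ + a₃₂*b₂₂ + a₃₃*b₃₂ + a₃₄*b₄₂,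
         a₃₁*b₁₃ + a₃₂*b₂₃ + a₃₃*b₃₃ + a₃₄*b₄₃, a₃₁*b₁₄ + a₃₂*b₂₄ + a₃₃*b₃₄ + a₃₄*b₄₄;
       a₄₁*b₁₁ + a₄₂*b₂₁ + a₄₃*b₃₁ + a₄₄*b₄₁, a₄₁*b₁₂ + a₄₂*b₂₂ + a₄₃*b₃₂ + a₄₄*b₄₂,
         a₄₁*b₁₃ + a₄₂*b₂₃ + a₄₃*b₃₃ + a₄₄*b₄₃, a₄₁*b₁₄ + a₄₂*b₂₄ + a₄₃*b₃₄ + a₄₄*b₄₄] := by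
  ext i j
  fin_cases i <;> fin_cases j
    <;> simp [Matrix.mul_apply, Fin.sum_univ_succ, ← add_assoc]

lemma ω_re : ω.re = -(1/2) := by simp [ω]; norm_num
lemma ω_im : ω.im = Real.sqrt 3 / 2 := by simp [ω]
lemma ω_sq : ω ^ 2 = -1 - ω := by
  have h3 : ((Real.sqrt 3 : ℝ) : ℂ) ^ 2 = 3 := by
    rw [← Complex.ofReal_pow, Real.sq_sqrt (by norm_num : (0:ℝ) ≤ 3)]; norm_num
  unfold ω
  linear_combination (Complex.I^2/4) * h3 + (3/4) * Complex.I_sq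
lemma ω_conj : (starRingEnd ℂ) ω = -1 - ω := by
  unfold ω
  rw [map_div₀, map_add, _root_.map_mul, Complex.conj_I, Complex.conj_ofReal,
    map_neg, _root_.map_one, map_ofNat]
  ring

lemma Zω_add {x y : ℂ} (hx : x ∈ Zω) (hy : y ∈ Zω) : x + y ∈ Zω := by
  obtain ⟨a, b, rfl⟩ := hx; obtain ⟨c, d, rfl⟩ := hy
  exact ⟨a + c, b + d, by push_cast; ring⟩
lemma Zω_neg {x : ℂ} (hx : x ∈ Zω) : -x ∈ Zω := by
  obtain ⟨a, b, rfl⟩ := hx; exact ⟨-a, -b, by push_cast; ring⟩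
lemma Zω_sub {x y : ℂ} (hx : x ∈ Zω) (hy : y ∈ Zω) : x - y ∈ Zω := by
  rw [sub_eq_add_neg]; exact Zω_add hx (Zω_neg hy)
lemma Zω_mul {x y : ℂ} (hx : x ∈ Zω) (hy : y ∈ Zω) : x * y ∈ Zω := by
  obtain ⟨a, b, rfl⟩ := hx; obtain ⟨c, d, rfl⟩ := hy
  refine ⟨a * c - b * d, a * d + b * c - b * d, ?_⟩
  push_cast
  linear_combination ((b : ℂ) * d) * ω_sq
lemma Zω_conj {x : ℂ} (hx : x ∈ Zω) : (starRingEnd ℂ) x ∈ Zω := by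
  obtain ⟨a, b, rfl⟩ := hx
  refine ⟨a - b, -b, ?_⟩
  rw [map_add, _root_.map_mul, ω_conj, map_intCast, map_intCast]
  push_cast; ring
lemma Zω_zero : (0 : ℂ) ∈ Zω := ⟨0, 0, by norm_num⟩
lemma Zω_one : (1 : ℂ) ∈ Zω := ⟨1, 0, by norm_num⟩

lemma Zω_real {x : ℝ} (hx : (x : ℂ) ∈ Zω) : ∃ a : ℤ, x = a := by
  obtain ⟨a, b, heq⟩ := hx
  have him := congrArg Complex.im heq
  simp [ω_im, Complex.mul_im] at him
  subst him
  refine ⟨a, ?_⟩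
  have : (x : ℂ) = (a : ℂ) := by simpa using heq
  exact_mod_cast this

lemma P_eq (τ₁ τ₂ : ℂ) (t r : ℝ) (U : Matrix (Fin 2) (Fin 2) ℂ) :
    N τ₁ τ₂ t * Ad r * M U =
    !![(r : ℂ),
       -((starRingEnd ℂ) τ₁ * U 0 0) - (starRingEnd ℂ) τ₂ * U 1 0,
       -((starRingEnd ℂ) τ₁ * U 0 1) - (starRingEnd ℂ) τ₂ * U 1 1,
       (-((Complex.normSq τ₁ : ℂ) + (Complex.normSq τ₂ : ℂ)) + Complex.I * (t : ℝ)) / 2 * ((r : ℂ))⁻¹;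
       0, U 0 0, U 0 1, τ₁ * ((r : ℂ))⁻¹;
       0, U 1 0, U 1 1, τ₂ * ((r : ℂ))⁻¹;
       0, 0, 0, ((r : ℂ))⁻¹] := by
  rw [N, Ad, M, my_mul_fin_four, my_mul_fin_four]
  ext i j
  fin_cases i <;> fin_cases j <;> simp <;> ring

/-- Characterization of the elements of the stabilizer of ∞ with Eisenstein integer entries
in terms of the parameters of their Langlands decomposition. -/
theorem stmt5 (r : ℝ) (hr : 0 < r) (t : ℝ) (τ₁ τ₂ : ℂ) (U : Matrix (Fin 2) (Fin 2) ℂ)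
    (hU : Uᴴ * U = 1) :
    (∀ i j, (N τ₁ τ₂ t * Ad r * M U) i j ∈ Zω) ↔
      (r = 1 ∧ (∀ i j, U i j ∈ Zω) ∧ τ₁ ∈ Zω ∧ τ₂ ∈ Zω ∧
        ∃ k m : ℤ, t = Real.sqrt 3 * (k : ℝ) ∧
          Complex.normSq τ₁ + Complex.normSq τ₂ = (m : ℝ) ∧ k % 2 = m % 2) := by
  rw [P_eq]
  constructor
  · intro h
    obtain ⟨a, har⟩ := Zω_real (x := r) (by simpa using h 0 0)
    obtain ⟨a', har'⟩ := Zω_real (x := r⁻¹)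
      (by rw [Complex.ofReal_inv]; simpa using h 3 3)
    have hrne : r ≠ 0 := ne_of_gt hr
    have hmul : (a : ℝ) * (a' : ℝ) = 1 := by
      rw [← har, ← har']; field_simp
    have hmul' : a * a' = 1 := by exact_mod_cast hmul
    have hapos : (0:ℝ) < (a:ℝ) := har ▸ hr
    have hapos' : 0 < a := by exact_mod_cast hapos
    have ha1 : a = 1 := by
      rcases Int.isUnit_iff.mp (IsUnit.of_mul_eq_one _ hmul') with h1 | h1 <;> omega
    have hr1 : r = 1 := by rw [har, ha1]; norm_num
    subst hr1
    refine ⟨rfl, ?_, ?_, ?_, ?_⟩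
    · intro i j
      fin_cases i <;> fin_cases j
      · simpa using h 1 1
      · simpa using h 1 2
      · simpa using h 2 1
      · simpa using h 2 2
    · simpa using h 1 3
    · simpa using h 2 3
    · have hz := h 0 3
      simp at hz
      obtain ⟨a, b, heq⟩ := hz
      have heq2 : -((Complex.normSq τ₁ : ℂ) + (Complex.normSq τ₂ : ℂ)) + Complex.I * (t : ℝ)
          = 2 * ((a : ℂ) + (b : ℂ) * ω) := by
        linear_combination 2 * heq
      have him := congrArg Complex.im heq2
      have hre := congrArg Complex.re heq2
      simp only [Complex.add_im, Complex.add_re, Complex.neg_im, Complex.neg_re,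
        Complex.mul_im, Complex.mul_re, Complex.I_re, Complex.I_im, Complex.ofReal_re,
        Complex.ofReal_im, Complex.intCast_re, Complex.intCast_im, ω_re, ω_im,
        Complex.re_ofNat, Complex.im_ofNat] at him hre
      norm_num at him hre
      refine ⟨b, b - 2 * a, ?_, ?_, ?_⟩
      · have : t = 2 * ((b : ℝ) * (Real.sqrt 3 / 2)) := by linarith
        rw [this]; push_cast; ring
      · push_cast
        nlinarith [hre]
      · omega
  · rintro ⟨rfl, hU', hτ₁, hτ₂, k, m, rfl, hm, hkm⟩
    obtain ⟨e, he⟩ : ∃ e : ℤ, k = m + 2 * e := ⟨(k - m) / 2, by omega⟩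
    have hmC : (Complex.normSq τ₁ : ℂ) + (Complex.normSq τ₂ : ℂ) = (m : ℂ) := by
      rw [← Complex.ofReal_add, hm]; push_cast; ring
    have hkC : (k : ℂ) = (m : ℂ) + 2 * (e : ℂ) := by exact_mod_cast he
    intro i j
    fin_cases i <;> fin_cases j <;> simp
    · exact Zω_one
    · exact Zω_sub (Zω_neg (Zω_mul (Zω_conj hτ₁) (hU' 0 0))) (Zω_mul (Zω_conj hτ₂) (hU' 1 0))
    · exact Zω_sub (Zω_neg (Zω_mul (Zω_conj hτ₁) (hU' 0 1))) (Zω_mul (Zω_conj hτ₂) (hU' 1 1))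
    · refine ⟨e, k, ?_⟩
      unfold ω
      linear_combination (-1/2) * hmC + hkC / 2
    · exact Zω_zero
    · exact hU' 0 0
    · exact hU' 0 1
    · exact hτ₁
    · exact Zω_zero
    · exact hU' 1 0
    · exact hU' 1 1
    · exact hτ₂
    · exact Zω_zero
    · exact Zω_zero
    · exact Zω_zero
    · exact Zω_one
end

section
/- Let G ∈ U(3,1) be a 4×4 matrix all of whose entries lie in Z[ω], with G₄₁ = 0. Then G₁₁ is a sixth root of unity, i.e. G₁₁⁶ = 1. -/
open Matrix Complex

lemma homega : ω^2 + ω + 1 = 0 := by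
  have h3c : (Real.sqrt 3 : ℂ)^2 = 3 := by norm_cast; rw [Real.sq_sqrt]; norm_num
  unfold ω
  linear_combination ((Real.sqrt 3:ℂ)^2/4) * Complex.I_sq - (1/4)*h3c

lemma normSq_eis (a b : ℤ) : Complex.normSq ((a:ℂ) + b*ω) = ((a^2 - a*b + b^2 : ℤ) : ℝ) := by
  have h3 : Real.sqrt 3 ^ 2 = 3 := Real.sq_sqrt (by norm_num)
  simp [Complex.normSq_apply, ω, Complex.add_re, Complex.add_im, Complex.div_re, Complex.div_im,
    Complex.mul_re, Complex.mul_im]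
  ring_nf
  nlinarith [h3]

lemma eis_unit (a b : ℤ) (h : a^2 - a*b + b^2 = 1) : ((a:ℂ) + b*ω)^6 = 1 := by
  have ha2 : a^2 ≤ 1 := by nlinarith [sq_nonneg (2*b-a)]
  have hb2 : b^2 ≤ 1 := by nlinarith [sq_nonneg (2*a-b)]
  have ha1 : -1 ≤ a := by nlinarith [sq_nonneg (a+1)]
  have ha1' : a ≤ 1 := by nlinarith [sq_nonneg (a-1)]
  have hb1 : -1 ≤ b := by nlinarith [sq_nonneg (b+1)]
  have hb1' : b ≤ 1 := by nlinarith [sq_nonneg (b-1)]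
  interval_cases a <;> interval_cases b <;> push_cast <;> first
    | (exfalso; omega)
    | linear_combination (ω^4 - ω^3 + ω - 1) * homega
    | linear_combination (ω^4 + 5*ω^3 + 9*ω^2 + 6*ω) * homega
    | norm_num

/-- If G ∈ U(3,1) has Eisenstein integer entries and G₄₁ = 0, then G₁₁ is a sixth root
of unity. -/
theorem stmt12 (G : Matrix (Fin 4) (Fin 4) ℂ) (hG : Gᴴ * Jm * G = Jm)
    (hent : ∀ i j, G i j ∈ Zω) (h41 : G 3 0 = 0) :
    (G 0 0) ^ 6 = 1 := by
  have h00 := congrFun (congrFun hG 0) 0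
  have h03 := congrFun (congrFun hG 0) 3
  simp [Matrix.mul_apply, Fin.sum_univ_four, Jm, Matrix.conjTranspose_apply, h41] at h00 h03
  -- h00 : conj (G 1 0) * G 1 0 + conj (G 2 0) * G 2 0 = 0
  have e1 : Complex.normSq (G 1 0) + Complex.normSq (G 2 0) = 0 := by
    have := congrArg Complex.re h00
    simpa [Complex.add_re, Complex.normSq_apply, Complex.mul_re, Complex.conj_re,
      Complex.conj_im] using this
  have h10 : G 1 0 = 0 := by
    rw [← Complex.normSq_eq_zero]
    have := Complex.normSq_nonneg (G 1 0)
    have := Complex.normSq_nonneg (G 2 0)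
    linarith
  have h20 : G 2 0 = 0 := by
    rw [← Complex.normSq_eq_zero]
    have := Complex.normSq_nonneg (G 1 0)
    have := Complex.normSq_nonneg (G 2 0)
    linarith
  rw [h10, h20] at h03
  simp at h03
  -- h03 : conj (G 0 0) * G 3 3 = 1
  have hns : Complex.normSq (G 0 0) * Complex.normSq (G 3 3) = 1 := by
    have := congrArg Complex.normSq h03
    simpa [_root_.map_mul, Complex.normSq_conj] using this
  obtain ⟨a, b, hab⟩ := hent 0 0
  obtain ⟨c, d, hcd⟩ := hent 3 3
  rw [hab, hcd, normSq_eis, normSq_eis] at hns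
  have hint : (a^2 - a*b + b^2) * (c^2 - c*d + d^2) = 1 := by exact_mod_cast hns
  have hnn : 0 ≤ a^2 - a*b + b^2 := by nlinarith [sq_nonneg (2*a-b), sq_nonneg b]
  have h1 : a^2 - a*b + b^2 = 1 := by
    rcases Int.isUnit_iff.mp (IsUnit.of_mul_eq_one _ hint) with h | h
    · exact h
    · omega
  rw [hab]
  exact eis_unit a b h1
end
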